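/- If the kernel K is constant in time and f̂ solves f̂'(t) = K(y - f̂(t)), then d²R²/dt² = -4‖y - f̂(t)‖²_{K²}/‖y - ȳ𝟙‖₂² ≤ 0; i.e., R² is concave in t. -/

import Mathlib

open Matrix

theorem r2_second_derivative_concave {n : ℕ} (y : Fin n → ℝ) (ybar : ℝ)
    (hybar : ybar = (1 / n) * ∑ i, y i)
    (hy : (∑ i, (y i - ybar) ^ 2) > 0)
    (K : Matrix (Fin n) (Fin n) ℝ)
    (hK : K.IsHermitian) (hKpsd : K.PosSemidef)
    (f : ℝ → (Fin n → ℝ))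
    (hder : ∀ t, HasDerivAt f (K *ᵥ (y - f t)) t)
    (t : ℝ) :
    HasDerivAt (fun s => 2 * ((y - f s) ⬝ᵥ K *ᵥ (y - f s)) / (∑ i, (y i - ybar) ^ 2))
      (-4 * ((y - f t) ⬝ᵥ (K * K) *ᵥ (y - f t)) / (∑ i, (y i - ybar) ^ 2)) t ∧
    -4 * ((y - f t) ⬝ᵥ (K * K) *ᵥ (y - f t)) / (∑ i, (y i - ybar) ^ 2) ≤ 0 := by
  set C := (∑ i, (y i - ybar) ^ 2) with hC
  set g : Fin n → ℝ := y - f t with hg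
  set v : Fin n → ℝ := K *ᵥ g with hv
  have hKsymm : ∀ i j, K i j = K j i := by
    intro i j
    have := congrFun (congrFun hK j) i
    simpa [Matrix.conjTranspose_apply] using this
  -- componentwise derivatives
  have hcomp : ∀ i, HasDerivAt (fun s => y i - f s i) (-(v i)) t := by
    intro i
    have := (hasDerivAt_pi.mp (hder t)) i
    simpa using (hasDerivAt_const t (y i)).fun_sub this
  -- derivative of the quadratic form as a double sum
  have hsum : HasDerivAt
      (fun s => ∑ i, ∑ j, (y i - f s i) * (K i j * (y j - f s j)))
      (∑ i, ∑ j, ((-(v i)) * (K i j * g j) + g i * (K i j * (-(v j))))) t := by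
    apply HasDerivAt.fun_sum
    intro i _
    apply HasDerivAt.fun_sum
    intro j _
    have h1 := hcomp i
    have h2 := (hcomp j).const_mul (K i j)
    have := h1.fun_mul h2
    simpa [hg] using this
  have hfun : (fun s => (y - f s) ⬝ᵥ K *ᵥ (y - f s))
      = (fun s => ∑ i, ∑ j, (y i - f s i) * (K i j * (y j - f s j))) := by
    funext s
    simp [dotProduct, Matrix.mulVec, Finset.mul_sum, Pi.sub_apply]
  have hQ : (∑ i, ∑ j, ((-(v i)) * (K i j * g j) + g i * (K i j * (-(v j)))))
      = -2 * (g ⬝ᵥ (K * K) *ᵥ g) := by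
    have e1 : (∑ i, ∑ j, (-(v i)) * (K i j * g j)) = -(v ⬝ᵥ K *ᵥ g) := by
      simp [dotProduct, Matrix.mulVec, Finset.mul_sum, Finset.sum_neg_distrib]
    have e2 : (∑ i, ∑ j, g i * (K i j * (-(v j)))) = -(g ⬝ᵥ K *ᵥ v) := by
      simp [dotProduct, Matrix.mulVec, Finset.mul_sum, Finset.sum_neg_distrib]
    have hKT : Kᵀ = K := by
      ext i j; exact (hKsymm i j).symm
    have e3 : v ⬝ᵥ K *ᵥ g = g ⬝ᵥ K *ᵥ v := by
      rw [Matrix.dotProduct_mulVec, ← Matrix.mulVec_transpose, hKT,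
        dotProduct_comm]
    have e4 : g ⬝ᵥ (K * K) *ᵥ g = g ⬝ᵥ K *ᵥ v := by
      rw [hv, Matrix.mulVec_mulVec]
    simp only [Finset.sum_add_distrib]
    rw [e1, e2, e3, e4]; ring
  have key : HasDerivAt (fun s => (y - f s) ⬝ᵥ K *ᵥ (y - f s))
      (-2 * (g ⬝ᵥ (K * K) *ᵥ g)) t := by
    rw [hfun, ← hQ]; exact hsum
  have key2 : HasDerivAt (fun s => 2 * ((y - f s) ⬝ᵥ K *ᵥ (y - f s)) / C)
      (-4 * (g ⬝ᵥ (K * K) *ᵥ g) / C) t := by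
    have := (key.const_mul 2).div_const C
    rw [show (-4 * (g ⬝ᵥ (K * K) *ᵥ g) / C) = 2 * (-2 * (g ⬝ᵥ (K * K) *ᵥ g)) / C by ring]
    exact this
  have hQnn : 0 ≤ g ⬝ᵥ (K * K) *ᵥ g := by
    have hpsd : (K * K).PosSemidef := by
      nth_rewrite 1 [← hK]
      exact Matrix.posSemidef_conjTranspose_mul_self K
    simpa using hpsd.dotProduct_mulVec_nonneg g
  constructor
  · exact key2
  · apply div_nonpos_of_nonpos_of_nonneg
    · nlinarith
    · exact le_of_lt hy
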